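/- Let n = 2 and let f(w) = (1/2)⟨w, Aw⟩ − ⟨b, w⟩ + c be a quadratic function on ℝ² with A symmetric positive definite. Let x ∈ ℝ² with g := ∇f(x) ≠ 0, let t := 2‖g‖²/⟨g, Ag⟩, y := x − t·g, and h := ∇f(y). Assume g and h are linearly independent, and define Δ := ⟨h, Ah⟩⟨g, Ag⟩ − ⟨g, Ah⟩², α := (⟨h, g⟩⟨g, Ah⟩ − ⟨g, g⟩⟨h, Ah⟩)/Δ, β := (−⟨h, g⟩⟨g, Ag⟩ + ⟨g, g⟩⟨h, Ag⟩)/Δ, and p := x + α·g + β·h. Then ∇f(p) = 0; that is, p = A⁻¹b is the unique global minimizer of f, so the Method of Ellipcenters solves the problem in one step (coinciding with Newton's method in ℝ²). -/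

import Mathlib

open Matrix

/-- In dimension `n = 2`, the ellipcenter iterate `p` satisfies
`∇f(p) = 0`, i.e. `p = A⁻¹b` is the unique global minimizer of `f`: the Method of
Ellipcenters solves the problem in one step (coinciding with Newton's method in ℝ²). -/
theorem stmt5 (A : Matrix (Fin 2) (Fin 2) ℝ) (hA : A.PosDef)
    (b : Fin 2 → ℝ) (c : ℝ) (f : (Fin 2 → ℝ) → ℝ)
    (hf : ∀ w, f w = (1/2) * (w ⬝ᵥ A.mulVec w) - b ⬝ᵥ w + c)
    (x g : Fin 2 → ℝ) (hg : g = A.mulVec x - b) (hg0 : g ≠ 0)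
    (t : ℝ) (ht : t = 2 * (g ⬝ᵥ g) / (g ⬝ᵥ A.mulVec g))
    (y : Fin 2 → ℝ) (hy : y = x - t • g)
    (h : Fin 2 → ℝ) (hh : h = A.mulVec y - b)
    (hindep : LinearIndependent ℝ ![g, h])
    (Δ α β : ℝ)
    (hΔ : Δ = (h ⬝ᵥ A.mulVec h) * (g ⬝ᵥ A.mulVec g) - (g ⬝ᵥ A.mulVec h) ^ 2)
    (hα : α = ((h ⬝ᵥ g) * (g ⬝ᵥ A.mulVec h) - (g ⬝ᵥ g) * (h ⬝ᵥ A.mulVec h)) / Δ)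
    (hβ : β = (-(h ⬝ᵥ g) * (g ⬝ᵥ A.mulVec g) + (g ⬝ᵥ g) * (h ⬝ᵥ A.mulVec g)) / Δ)
    (p : Fin 2 → ℝ) (hp : p = x + α • g + β • h) :
    A.mulVec p - b = 0 ∧ p = A⁻¹.mulVec b := by
  -- positivity of the quadratic form
  have hpos : ∀ v : Fin 2 → ℝ, v ≠ 0 → 0 < v ⬝ᵥ A.mulVec v := by
    intro v hv
    have := hA.re_dotProduct_pos hv
    simpa using this
  -- symmetry of the quadratic form
  have hsymm : ∀ u v : Fin 2 → ℝ, u ⬝ᵥ A.mulVec v = v ⬝ᵥ A.mulVec u := by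
    intro u v
    have hAt : Aᵀ = A := by
      have := hA.isHermitian
      simpa [Matrix.IsHermitian, Matrix.conjTranspose_eq_transpose_of_trivial] using this
    rw [Matrix.dotProduct_mulVec, ← hAt, Matrix.vecMul_transpose, dotProduct_comm, hAt]
  -- independence facts
  have hpair := linearIndependent_fin2.mp hindep
  have hh0 : h ≠ 0 := by simpa using hpair.1
  have hcomb : ∀ s : ℝ, g + s • h ≠ 0 := by
    intro s hs
    have h2 := hpair.2 (-s)
    simp only [Matrix.cons_val_one, Matrix.head_cons, Matrix.cons_val_zero] at h2
    apply h2
    funext i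
    have := congrFun hs i
    simp only [Pi.add_apply, Pi.smul_apply, Pi.zero_apply, smul_eq_mul] at this ⊢
    linarith
  set q1 := g ⬝ᵥ A.mulVec g with hq1
  set q2 := g ⬝ᵥ A.mulVec h with hq2
  set q3 := h ⬝ᵥ A.mulVec h with hq3
  have hq3pos : 0 < q3 := hpos h hh0
  -- Δ > 0
  have hΔpos : 0 < Δ := by
    set s : ℝ := -q2 / q3 with hs
    have hexp : (g + s • h) ⬝ᵥ A.mulVec (g + s • h) = q1 + 2 * s * q2 + s ^ 2 * q3 := by
      have h21 : h ⬝ᵥ A.mulVec g = q2 := hsymm h g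
      simp only [Matrix.mulVec_add, Matrix.mulVec_smul, dotProduct_add,
        add_dotProduct, smul_dotProduct, dotProduct_smul,
        h21, ← hq1, ← hq2, ← hq3, smul_eq_mul]
      ring
    have hgt : 0 < q1 + 2 * s * q2 + s ^ 2 * q3 := hexp ▸ hpos _ (hcomb s)
    have : q1 + 2 * s * q2 + s ^ 2 * q3 = (q3 * q1 - q2 ^ 2) / q3 := by
      rw [hs]; field_simp; ring
    rw [this] at hgt
    have := (div_pos_iff.mp hgt)
    rw [hΔ]
    rcases this with ⟨h1, _⟩ | ⟨_, h2⟩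
    · exact h1
    · linarith
  have hΔne : Δ ≠ 0 := ne_of_gt hΔpos
  -- the residual vector
  set v : Fin 2 → ℝ := A.mulVec p - b with hv
  have hvexp : v = g + α • A.mulVec g + β • A.mulVec h := by
    rw [hv, hp, Matrix.mulVec_add, Matrix.mulVec_add, Matrix.mulVec_smul,
      Matrix.mulVec_smul, hg]
    abel
  have h21 : h ⬝ᵥ A.mulVec g = q2 := hsymm h g
  have hαΔ : α * Δ = (h ⬝ᵥ g) * q2 - (g ⬝ᵥ g) * q3 := by
    rw [hα]; field_simp
  have hβΔ : β * Δ = -(h ⬝ᵥ g) * q1 + (g ⬝ᵥ g) * q2 := by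
    rw [hβ, h21]; field_simp
  have hgv : g ⬝ᵥ v = 0 := by
    have hz : Δ * (g ⬝ᵥ v) = 0 := by
      rw [hvexp]
      simp only [dotProduct_add, dotProduct_smul, smul_eq_mul, ← hq1, ← hq2]
      linear_combination q1 * hαΔ + q2 * hβΔ + (g ⬝ᵥ g) * hΔ
    rcases mul_eq_zero.mp hz with h0 | h0
    · exact absurd h0 hΔne
    · exact h0
  have hhv : h ⬝ᵥ v = 0 := by
    have hz : Δ * (h ⬝ᵥ v) = 0 := by
      rw [hvexp]
      simp only [dotProduct_add, dotProduct_smul, smul_eq_mul, h21, ← hq3]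
      linear_combination q2 * hαΔ + q3 * hβΔ + (h ⬝ᵥ g) * hΔ
    rcases mul_eq_zero.mp hz with h0 | h0
    · exact absurd h0 hΔne
    · exact h0
  -- g, h span everything
  have hspan : Submodule.span ℝ {g, h} = ⊤ := by
    have hsp := (basisOfLinearIndependentOfCardEqFinrank hindep (by simp)).span_eq
    rw [coe_basisOfLinearIndependentOfCardEqFinrank] at hsp
    have hr : Set.range ![g, h] = {g, h} := by
      ext w
      simp [Fin.exists_fin_two, eq_comm]
      tauto
    rwa [hr] at hsp
  have hv0 : v = 0 := by
    have hvmem : v ∈ Submodule.span ℝ ({g, h} : Set (Fin 2 → ℝ)) := hspan ▸ trivial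
    obtain ⟨m, n, hmn⟩ := Submodule.mem_span_pair.mp hvmem
    have hvv : v ⬝ᵥ v = 0 := by
      calc v ⬝ᵥ v = (m • g + n • h) ⬝ᵥ v := by rw [hmn]
        _ = m * (g ⬝ᵥ v) + n * (h ⬝ᵥ v) := by
            rw [add_dotProduct, smul_dotProduct, smul_dotProduct]
            simp
        _ = 0 := by rw [hgv, hhv]; ring
    exact dotProduct_self_eq_zero.mp hvv
  refine ⟨hv0, ?_⟩
  have hAp : A.mulVec p = b := by
    have := hv0
    rw [hv] at this
    exact sub_eq_zero.mp this
  rw [← hAp, Matrix.mulVec_mulVec, Matrix.nonsing_inv_mul A (isUnit_iff_ne_zero.mpr hA.det_pos.ne'),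
    Matrix.one_mulVec]
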